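/- For every integer k ≥ 3, if α is the dominant root of Ψ_k(x) then 1/f_k(α) < 4 and 1/log α < 2, where f_k(x) = (x−1)/(2 + (k+1)(x−2)). -/

import Mathlib

/-- For k ≥ 3, if α is the dominant root of Ψ_k, then 1/f_k(α) < 4 and
    1/log α < 2, where f_k(x) = (x−1)/(2 + (k+1)(x−2)). -/
theorem lucas_fk_log_bounds (k : ℕ) (hk : 3 ≤ k)
    (α : ℝ) (hα1 : 1 < α) (hα2 : α < 2)
    (hroot : α ^ k = ∑ i ∈ Finset.range k, α ^ i) :
    1 / ((α - 1) / (2 + (k + 1) * (α - 2))) < 4 ∧ 1 / Real.log α < 2 := by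
  have hk3 : (3 : ℝ) ≤ (k : ℝ) := by exact_mod_cast hk
  have hα1' : (0:ℝ) < α - 1 := by linarith
  -- α^k ≥ k ≥ 3
  have hsum : (k : ℝ) ≤ ∑ i ∈ Finset.range k, α ^ i := by
    calc (k : ℝ) = ∑ i ∈ Finset.range k, (1:ℝ) := by simp
    _ ≤ ∑ i ∈ Finset.range k, α ^ i :=
      Finset.sum_le_sum (fun i _ => one_le_pow₀ hα1.le)
  have hpk : (3 : ℝ) ≤ α ^ k := by linarith [hroot ▸ hsum]
  -- geometric sum: α^k (2 - α) = 1
  have hgeom : ∑ i ∈ Finset.range k, α ^ i = (α ^ k - 1) / (α - 1) :=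
    geom_sum_eq (by linarith) k
  have heq : α ^ k * (2 - α) = 1 := by
    rw [hgeom] at hroot
    field_simp at hroot
    nlinarith [hroot]
  -- hence α ≥ 5/3
  have hα53 : (5/3 : ℝ) ≤ α := by
    nlinarith [mul_le_mul_of_nonneg_right hpk (show (0:ℝ) ≤ 2 - α by linarith)]
  constructor
  · rw [one_div_div, div_lt_iff₀ hα1']
    nlinarith [mul_nonneg (show (0:ℝ) ≤ (k:ℝ) + 1 - 4 by linarith)
      (show (0:ℝ) ≤ 2 - α by linarith)]
  · have hexp : Real.exp (1/2) < α := by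
      have h1 : Real.exp (1/2) * Real.exp (1/2) = Real.exp 1 := by
        rw [← Real.exp_add]; norm_num
      nlinarith [Real.exp_pos (1/2 : ℝ), Real.exp_one_lt_d9]
    have hlog : (1/2 : ℝ) < Real.log α := by
      rw [Real.lt_log_iff_exp_lt (by linarith)]
      exact hexp
    rw [div_lt_iff₀ (by linarith)]
    linarith
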